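/- Under Assumption 1, the common probability mass function of S₋ⁱ and S₊ⁱ is nonincreasing on ℕ₀: P(S₊ⁱ = k) ≥ P(S₊ⁱ = k + 1) for all k ∈ ℕ₀. -/

import Mathlib

open MeasureTheory Filter Set ENNReal

noncomputable section

/-- The cluster `C(ω) = {t : I_t(ω) = 1}` of a binary process. -/
def clusterSet {Ω : Type*} (I : ℤ → Ω → Bool) (ω : Ω) : Set ℤ :=
  {t : ℤ | I t ω = true}

/-- Inspected cluster size `Sⁱ(ω) = Σ_{t ∈ ℤ} I_t(ω) ∈ ℕ ∪ {∞}`. -/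
def SiFn {Ω : Type*} (I : ℤ → Ω → Bool) (ω : Ω) : ℕ∞ :=
  {t : ℤ | I t ω = true}.encard

/-- Forward inspected cluster size `S₊ⁱ(ω) = Σ_{t ≥ 1} I_t(ω) ∈ ℕ₀ ∪ {∞}`. -/
def SplusFn {Ω : Type*} (I : ℤ → Ω → Bool) (ω : Ω) : ℕ∞ :=
  {t : ℤ | 0 < t ∧ I t ω = true}.encard

/-- Backward inspected cluster size `S₋ⁱ(ω) = Σ_{t ≤ -1} I_t(ω) ∈ ℕ₀ ∪ {∞}`. -/
def SminusFn {Ω : Type*} (I : ℤ → Ω → Bool) (ω : Ω) : ℕ∞ :=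
  {t : ℤ | t < 0 ∧ I t ω = true}.encard


section Aux
variable {Ω : Type*} [MeasurableSpace Ω]

def Cyl (I : ℤ → Ω → Bool) (F : Finset ℤ) (ε : ℤ → Bool) : Set Ω :=
  {ω | ∀ t ∈ F, I t ω = ε t}

lemma measurableSet_eq_bool {I : ℤ → Ω → Bool} (hI : ∀ t, Measurable (I t)) (t : ℤ) (b : Bool) :
    MeasurableSet {ω | I t ω = b} :=
  (hI t) (measurableSet_singleton b)

lemma measurableSet_Cyl {I : ℤ → Ω → Bool} (hI : ∀ t, Measurable (I t)) (F : Finset ℤ)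
    (ε : ℤ → Bool) : MeasurableSet (Cyl I F ε) := by
  have h : Cyl I F ε = ⋂ t ∈ F, {ω | I t ω = ε t} := by ext ω; simp [Cyl]
  rw [h]
  exact MeasurableSet.biInter F.countable_toSet (fun t _ => measurableSet_eq_bool hI t _)

def HSet (I : ℤ → Ω → Bool) (A : Finset ℤ) : Set Ω :=
  {ω | ∀ t : ℤ, 0 < t → I t ω = decide (t ∈ A)}

def KSet (I : ℤ → Ω → Bool) (s : ℤ) (B : Finset ℤ) : Set Ω :=
  {ω | I (-s) ω = true ∧ (∀ t : ℤ, -s < t → t < 0 → I t ω = false) ∧ I 0 ω = true ∧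
    ∀ t : ℤ, 0 < t → I t ω = decide (t ∈ B)}

lemma measurableSet_HSet {I : ℤ → Ω → Bool} (hI : ∀ t, Measurable (I t)) (A : Finset ℤ) :
    MeasurableSet (HSet I A) := by
  have h : HSet I A = ⋂ t : ℤ, {ω | 0 < t → I t ω = decide (t ∈ A)} := by ext ω; simp [HSet]
  rw [h]
  refine MeasurableSet.iInter fun t => ?_
  by_cases ht : 0 < t
  · have h2 : {ω : Ω | 0 < t → I t ω = decide (t ∈ A)} = {ω | I t ω = decide (t ∈ A)} := by
      ext ω; simp [ht]
    rw [h2]; exact measurableSet_eq_bool hI t _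
  · have h2 : {ω : Ω | 0 < t → I t ω = decide (t ∈ A)} = univ := by ext ω; simp [ht]
    rw [h2]; exact .univ

lemma measurableSet_KSet {I : ℤ → Ω → Bool} (hI : ∀ t, Measurable (I t)) (s : ℤ) (B : Finset ℤ) :
    MeasurableSet (KSet I s B) := by
  have h : KSet I s B = {ω | I (-s) ω = true} ∩
      ((⋂ t : ℤ, {ω | -s < t → t < 0 → I t ω = false}) ∩
        ({ω | I 0 ω = true} ∩ ⋂ t : ℤ, {ω | 0 < t → I t ω = decide (t ∈ B)})) := by
    ext ω
    simp only [KSet, mem_setOf_eq, mem_inter_iff, mem_iInter]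
  rw [h]
  refine (measurableSet_eq_bool hI _ _).inter (MeasurableSet.inter ?_
    ((measurableSet_eq_bool hI _ _).inter ?_)) <;> refine MeasurableSet.iInter fun t => ?_
  · by_cases ht : -s < t ∧ t < 0
    · have h2 : {ω : Ω | -s < t → t < 0 → I t ω = false} = {ω | I t ω = false} := by
        ext ω; simp [ht.1, ht.2]
      rw [h2]; exact measurableSet_eq_bool hI t _
    · have h2 : {ω : Ω | -s < t → t < 0 → I t ω = false} = univ := by
        ext ω; simp; intro h1 h2; exact absurd ⟨h1, h2⟩ ht
    -- fallthrough fixed below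
      rw [h2]; exact .univ
  · by_cases ht : 0 < t
    · have h2 : {ω : Ω | 0 < t → I t ω = decide (t ∈ B)} = {ω | I t ω = decide (t ∈ B)} := by
        ext ω; simp [ht]
      rw [h2]; exact measurableSet_eq_bool hI t _
    · have h2 : {ω : Ω | 0 < t → I t ω = decide (t ∈ B)} = univ := by ext ω; simp [ht]
      rw [h2]; exact .univ

end Aux
section Shift
variable {Ω : Type*} [MeasurableSpace Ω]

/-- rewriting a shifted cylinder as a cylinder over the shifted window -/
lemma shift_set_eq {γ : Type*} (X : ℤ → γ → Bool) (F : Finset ℤ) (ε : ℤ → Bool) (s : ℤ) :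
    {ω | ∀ t ∈ F, X (t - s) ω = ε t}
      = {ω | ∀ u ∈ F.image (· - s), X u ω = ε (u + s)} := by
  ext ω
  constructor
  · intro h u hu
    obtain ⟨t, ht, rfl⟩ := Finset.mem_image.mp hu
    rw [sub_add_cancel]
    exact h t ht
  · intro h t ht
    have h2 := h (t - s) (Finset.mem_image.mpr ⟨t, ht, rfl⟩)
    rwa [sub_add_cancel] at h2

/-- The key consequence of Assumption 1: the limit law is invariant under shifting
a cylinder containing ones at `0` and at `s`. -/
lemma cyl_shift (P : Measure Ω) (I : ℤ → Ω → Bool)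
    {Ωn : ℕ → Type*} [∀ n, MeasurableSpace (Ωn n)]
    (Pn : ∀ n, Measure (Ωn n)) (In : ∀ n, ℤ → Ωn n → Bool)
    (hstat : ∀ n (F : Finset ℤ) (ε : ℤ → Bool) (k : ℤ),
      Pn n {ω | ∀ t ∈ F, In n t ω = ε t} = Pn n {ω | ∀ t ∈ F, In n (t + k) ω = ε t})
    (hconv : ∀ (F : Finset ℤ) (ε : ℤ → Bool),
      Tendsto (fun n =>
          Pn n ({ω | ∀ t ∈ F, In n t ω = ε t} ∩ {ω | In n 0 ω = true})
            / Pn n {ω | In n 0 ω = true}) atTop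
        (nhds (P {ω | ∀ t ∈ F, I t ω = ε t})))
    (F : Finset ℤ) (ε : ℤ → Bool) (s : ℤ) (h0 : 0 ∈ F) (hε0 : ε 0 = true)
    (hs : s ∈ F) (hεs : ε s = true) :
    P {ω | ∀ t ∈ F, I t ω = ε t} = P {ω | ∀ t ∈ F, I (t - s) ω = ε t} := by
  have h0' : (0 : ℤ) ∈ F.image (· - s) := Finset.mem_image.mpr ⟨s, hs, sub_self s⟩
  have hε0' : ε (0 + s) = true := by rwa [zero_add]
  have key1 : ∀ n, {ω | ∀ t ∈ F, In n t ω = ε t} ∩ {ω | In n 0 ω = true}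
      = {ω | ∀ t ∈ F, In n t ω = ε t} := by
    intro n
    refine inter_eq_left.mpr fun ω hω => ?_
    have := hω 0 h0
    rw [hε0] at this
    exact this
  have key2 : ∀ n, {ω | ∀ u ∈ F.image (· - s), In n u ω = ε (u + s)} ∩ {ω | In n 0 ω = true}
      = {ω | ∀ u ∈ F.image (· - s), In n u ω = ε (u + s)} := by
    intro n
    refine inter_eq_left.mpr fun ω hω => ?_
    have := hω 0 h0'
    rw [hε0'] at this
    exact this
  have heq : ∀ n, Pn n ({ω | ∀ t ∈ F, In n t ω = ε t} ∩ {ω | In n 0 ω = true})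
      = Pn n ({ω | ∀ u ∈ F.image (· - s), In n u ω = ε (u + s)} ∩ {ω | In n 0 ω = true}) := by
    intro n
    rw [key1, key2, ← shift_set_eq (In n) F ε s]
    have h1 : {ω | ∀ t ∈ F, In n (t - s) ω = ε t} = {ω | ∀ t ∈ F, In n (t + (-s)) ω = ε t} := by
      simp only [sub_eq_add_neg]
    rw [h1, ← hstat n F ε (-s)]
  have T1 := hconv F ε
  have T2 := hconv (F.image (· - s)) (fun u => ε (u + s))
  have T2' : Tendsto (fun n =>
      Pn n ({ω | ∀ t ∈ F, In n t ω = ε t} ∩ {ω | In n 0 ω = true})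
        / Pn n {ω | In n 0 ω = true}) atTop
      (nhds (P {ω | ∀ u ∈ F.image (· - s), I u ω = ε (u + s)})) := by
    refine T2.congr fun n => ?_
    rw [heq n]
  rw [shift_set_eq I F ε s]
  exact tendsto_nhds_unique T1 T2'

/-- Under the Palm limit, `I₀ = 1` almost surely. -/
lemma palm_I0 (P : Measure Ω) [IsProbabilityMeasure P] (I : ℤ → Ω → Bool)
    {Ωn : ℕ → Type*} [∀ n, MeasurableSpace (Ωn n)]
    (Pn : ∀ n, Measure (Ωn n)) (hPn : ∀ n, IsProbabilityMeasure (Pn n))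
    (In : ∀ n, ℤ → Ωn n → Bool)
    (hpos : ∀ n, 0 < Pn n {ω | In n 0 ω = true})
    (hconv : ∀ (F : Finset ℤ) (ε : ℤ → Bool),
      Tendsto (fun n =>
          Pn n ({ω | ∀ t ∈ F, In n t ω = ε t} ∩ {ω | In n 0 ω = true})
            / Pn n {ω | In n 0 ω = true}) atTop
        (nhds (P {ω | ∀ t ∈ F, I t ω = ε t})))
    : P {ω | I 0 ω = true} = 1 := by
  have h := hconv {0} (fun _ => true)
  have h1 : ∀ n : ℕ, {ω | ∀ t ∈ ({0} : Finset ℤ), In n t ω = true} = {ω | In n 0 ω = true} := by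
    intro n; ext ω; simp
  have h2 : {ω | ∀ t ∈ ({0} : Finset ℤ), I t ω = true} = {ω | I 0 ω = true} := by
    ext ω; simp
  rw [h2] at h
  have h3 : Tendsto (fun _ : ℕ => (1 : ℝ≥0∞)) atTop (nhds (P {ω | I 0 ω = true})) := by
    refine h.congr fun n => ?_
    rw [h1 n, inter_self]
    exact ENNReal.div_self (hpos n).ne' (measure_ne_top _ _)
  exact (tendsto_nhds_unique tendsto_const_nhds h3).symm
end Shift
section Core
variable {Ω : Type*} [MeasurableSpace Ω]

lemma measure_HZ_eq_K (P : Measure Ω) [IsProbabilityMeasure P]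
    (I : ℤ → Ω → Bool) (hI : ∀ t, Measurable (I t))
    {Ωn : ℕ → Type*} [∀ n, MeasurableSpace (Ωn n)]
    (Pn : ∀ n, Measure (Ωn n)) (In : ∀ n, ℤ → Ωn n → Bool)
    (hstat : ∀ n (F : Finset ℤ) (ε : ℤ → Bool) (k : ℤ),
      Pn n {ω | ∀ t ∈ F, In n t ω = ε t} = Pn n {ω | ∀ t ∈ F, In n (t + k) ω = ε t})
    (hconv : ∀ (F : Finset ℤ) (ε : ℤ → Bool),
      Tendsto (fun n =>
          Pn n ({ω | ∀ t ∈ F, In n t ω = ε t} ∩ {ω | In n 0 ω = true})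
            / Pn n {ω | In n 0 ω = true}) atTop
        (nhds (P {ω | ∀ t ∈ F, I t ω = ε t})))
    (A : Finset ℤ) (hApos : ∀ a ∈ A, 0 < a) (hne : A.Nonempty) :
    P ({ω | I 0 ω = true} ∩ HSet I A)
      = P (KSet I (A.min' hne) ((A.erase (A.min' hne)).image (· - A.min' hne))) := by
  set s := A.min' hne with hsdef
  set B := (A.erase s).image (· - s) with hBdef
  have hsA : s ∈ A := A.min'_mem hne
  have hs1 : 1 ≤ s := hApos s hsA
  set M : ℤ := A.max' hne with hMdef
  have hsM : s ≤ M := A.le_max' s hsA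
  have hM0 : (0:ℤ) ≤ M := le_trans (by omega) hsM
  have hBpos : ∀ b ∈ B, 0 < b := by
    intro b hb
    obtain ⟨a, ha, rfl⟩ := Finset.mem_image.mp hb
    obtain ⟨hanes, haA⟩ := Finset.mem_erase.mp ha
    have := A.min'_le a haA
    omega
  set εA : ℤ → Bool := fun t => (decide (t = 0) || decide (t ∈ A)) with hεA
  set εK : ℤ → Bool := fun t => (decide (t = -s) || decide (t = 0) || decide (t ∈ B)) with hεK
  have εeq : ∀ u : ℤ, εA (u + s) = εK u := by
    intro u
    have h2 : (u + s ∈ A) ↔ (u = 0 ∨ u ∈ B) := by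
      constructor
      · intro ha
        by_cases hu : u = 0
        · exact Or.inl hu
        · exact Or.inr (Finset.mem_image.mpr
            ⟨u + s, Finset.mem_erase.mpr ⟨by omega, ha⟩, by omega⟩)
      · rintro (rfl | hu)
        · simpa using hsA
        · obtain ⟨a, ha, rfl⟩ := Finset.mem_image.mp hu
          have h3 := (Finset.mem_erase.mp ha).2
          rwa [sub_add_cancel]
    have h1 : u + s = 0 ↔ u = -s := by omega
    rw [Bool.eq_iff_iff]
    simp only [hεA, hεK, Bool.or_eq_true, decide_eq_true_eq]
    tauto
  -- the per-step shifted cylinder identity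
  have perM : ∀ m : ℕ, P (Cyl I (Finset.Icc 0 (M + m)) εA)
      = P (Cyl I (Finset.Icc (-s) (M + m - s)) εK) := by
    intro m
    have hshift := cyl_shift P I Pn In hstat hconv (Finset.Icc 0 (M + m)) εA s
      (by rw [Finset.mem_Icc]; omega) (by simp [hεA])
      (by rw [Finset.mem_Icc]; omega) (by simp [hεA, hsA])
    have hset : {ω : Ω | ∀ t ∈ Finset.Icc (0:ℤ) (M + m), I (t - s) ω = εA t}
        = Cyl I (Finset.Icc (-s) (M + m - s)) εK := by
      ext ω
      constructor
      · intro h u hu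
        rw [Finset.mem_Icc] at hu
        have h2 := h (u + s) (by rw [Finset.mem_Icc]; omega)
        rw [add_sub_cancel_right] at h2
        rw [← εeq u]
        exact h2
      · intro h t ht
        rw [Finset.mem_Icc] at ht
        have h2 := h (t - s) (by rw [Finset.mem_Icc]; omega)
        rw [← εeq (t - s), sub_add_cancel] at h2
        exact h2
    calc P (Cyl I (Finset.Icc 0 (M + m)) εA)
        = P {ω : Ω | ∀ t ∈ Finset.Icc (0:ℤ) (M + m), I (t - s) ω = εA t} := hshift
      _ = P (Cyl I (Finset.Icc (-s) (M + m - s)) εK) := by rw [hset]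
  -- continuity from above for both families
  have hanti1 : Antitone (fun m : ℕ => Cyl I (Finset.Icc (0:ℤ) (M + m)) εA) := by
    intro m m' hmm ω hω t ht
    refine hω t (Finset.Icc_subset_Icc le_rfl ?_ ht)
    have : (m : ℤ) ≤ (m' : ℤ) := by exact_mod_cast hmm
    omega
  have hanti2 : Antitone (fun m : ℕ => Cyl I (Finset.Icc (-s) (M + m - s)) εK) := by
    intro m m' hmm ω hω t ht
    refine hω t (Finset.Icc_subset_Icc le_rfl ?_ ht)
    have : (m : ℤ) ≤ (m' : ℤ) := by exact_mod_cast hmm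
    omega
  have hiInter1 : (⋂ m : ℕ, Cyl I (Finset.Icc (0:ℤ) (M + m)) εA)
      = {ω | I 0 ω = true} ∩ HSet I A := by
    ext ω
    simp only [mem_iInter, Cyl, mem_setOf_eq, mem_inter_iff, HSet, Finset.mem_Icc]
    constructor
    · intro h
      refine ⟨?_, ?_⟩
      · have h0 := h 0 0 ⟨le_rfl, by omega⟩
        simpa [hεA] using h0
      · intro t ht
        have h2 := h t.toNat t ⟨by omega, by omega⟩
        rw [h2]
        simp only [hεA]
        simp
        exact fun h => absurd h (by omega)
    · rintro ⟨h0, hH⟩ m t ⟨ht0, htm⟩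
      by_cases he : t = 0
      · subst he; simpa [hεA] using h0
      · rw [hH t (by omega)]
        simp [hεA, he]
  have hiInter2 : (⋂ m : ℕ, Cyl I (Finset.Icc (-s) (M + m - s)) εK) = KSet I s B := by
    ext ω
    simp only [mem_iInter, Cyl, mem_setOf_eq, KSet, Finset.mem_Icc]
    constructor
    · intro h
      refine ⟨?_, ?_, ?_, ?_⟩
      · have h2 := h 0 (-s) ⟨le_rfl, by omega⟩
        simpa [hεK] using h2
      · intro t ht1 ht2
        have hb : t ∉ B := fun hb => by have := hBpos t hb; omega
        have h2 := h 0 t ⟨by omega, by omega⟩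
        rw [h2]
        simp only [hεK]
        simp [hb]
        omega
      · have h2 := h 0 0 ⟨by omega, by omega⟩
        rw [h2]
        simp [hεK, (by omega : ¬ (0:ℤ) = -s)]
      · intro t ht
        have h2 := h (t + s).toNat t ⟨by omega, by omega⟩
        rw [h2]
        simp only [hεK]
        simp
        exact fun h => absurd h (by omega)
    · rintro ⟨h1, h2, h3, h4⟩ m t ⟨hta, htb⟩
      by_cases he1 : t = -s
      · subst he1; rw [h1]; simp [hεK]
      · by_cases he2 : t = 0
        · subst he2; rw [h3]; simp [hεK, (by omega : ¬ (0:ℤ) = -s)]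
        · by_cases he3 : t < 0
          · rw [h2 t (by omega) he3]
            have hb : t ∉ B := fun hb => by have := hBpos t hb; omega
            simp [hεK, he1, he2, hb]
          · rw [h4 t (by omega)]
            simp [hεK, he1, he2]
  have L1 := tendsto_measure_iInter_atTop (μ := P)
      (fun m : ℕ => (measurableSet_Cyl hI _ εA).nullMeasurableSet) hanti1 ⟨0, measure_ne_top _ _⟩
  have L2 := tendsto_measure_iInter_atTop (μ := P)
      (fun m : ℕ => (measurableSet_Cyl hI _ εK).nullMeasurableSet) hanti2 ⟨0, measure_ne_top _ _⟩
  rw [hiInter1] at L1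
  rw [hiInter2] at L2
  exact tendsto_nhds_unique L1 (L2.congr fun m => (perM m).symm)

end Core
section Main
variable {Ω : Type*} [MeasurableSpace Ω]

lemma HSet_subset_Splus (I : ℤ → Ω → Bool) (A : Finset ℤ) (hApos : ∀ a ∈ A, 0 < a) :
    HSet I A ⊆ {ω | SplusFn I ω = (A.card : ℕ∞)} := by
  intro ω hω
  have h : {t : ℤ | 0 < t ∧ I t ω = true} = (A : Set ℤ) := by
    ext t
    simp only [mem_setOf_eq, Finset.mem_coe]
    constructor
    · rintro ⟨ht, hIt⟩
      have h2 := hω t ht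
      rw [hIt] at h2
      exact of_decide_eq_true h2.symm
    · intro ht
      refine ⟨hApos t ht, ?_⟩
      rw [hω t (hApos t ht)]
      simp [ht]
  show ({t : ℤ | 0 < t ∧ I t ω = true}).encard = _
  rw [h, Set.encard_coe_eq_coe_finsetCard]

lemma splus_mono (P : Measure Ω) [IsProbabilityMeasure P]
    (I : ℤ → Ω → Bool) (hI : ∀ t, Measurable (I t))
    {Ωn : ℕ → Type*} [∀ n, MeasurableSpace (Ωn n)]
    (Pn : ∀ n, Measure (Ωn n)) (hPn : ∀ n, IsProbabilityMeasure (Pn n))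
    (In : ∀ n, ℤ → Ωn n → Bool)
    (hpos : ∀ n, 0 < Pn n {ω | In n 0 ω = true})
    (hstat : ∀ n (F : Finset ℤ) (ε : ℤ → Bool) (k : ℤ),
      Pn n {ω | ∀ t ∈ F, In n t ω = ε t} = Pn n {ω | ∀ t ∈ F, In n (t + k) ω = ε t})
    (hconv : ∀ (F : Finset ℤ) (ε : ℤ → Bool),
      Tendsto (fun n =>
          Pn n ({ω | ∀ t ∈ F, In n t ω = ε t} ∩ {ω | In n 0 ω = true})
            / Pn n {ω | In n 0 ω = true}) atTop
        (nhds (P {ω | ∀ t ∈ F, I t ω = ε t})))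
    (k : ℕ) :
    P {ω | SplusFn I ω = ((k + 1 : ℕ) : ℕ∞)} ≤ P {ω | SplusFn I ω = (k : ℕ∞)} := by
  classical
  set Z : Set Ω := {ω | I 0 ω = true} with hZdef
  have hZmeas : MeasurableSet Z := measurableSet_eq_bool hI 0 true
  have hZ1 : P Z = 1 := palm_I0 P I Pn hPn In hpos hconv
  set E : Set Ω := {ω | SplusFn I ω = ((k + 1 : ℕ) : ℕ∞)} with hEdef
  -- index types
  let Λ := {A : Finset ℤ // A.card = k + 1 ∧ ∀ a ∈ A, 0 < a}
  let Θ := {p : ℤ × Finset ℤ // 1 ≤ p.1 ∧ p.2.card = k ∧ ∀ b ∈ p.2, 0 < b}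
  -- E ∩ Z is the disjoint union of the trace events
  have hU : E ∩ Z = ⋃ (A : Λ), (Z ∩ HSet I A.1) := by
    ext ω
    constructor
    · rintro ⟨hS, hZω⟩
      have hS' : ({t : ℤ | 0 < t ∧ I t ω = true}).encard = ((k + 1 : ℕ) : ℕ∞) := hS
      have hfin : ({t : ℤ | 0 < t ∧ I t ω = true}).Finite := Set.finite_of_encard_eq_coe hS'
      set A : Finset ℤ := hfin.toFinset with hAdef
      have hcardc : ((A.card : ℕ) : ℕ∞) = ((k + 1 : ℕ) : ℕ∞) := by
        rw [← hfin.encard_eq_coe_toFinset_card]; exact hS'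
      have hcard : A.card = k + 1 := by exact_mod_cast hcardc
      have hApos : ∀ a ∈ A, 0 < a := by
        intro a ha
        exact (hfin.mem_toFinset.mp ha).1
      have hHω : ω ∈ HSet I A := by
        intro t ht
        cases hb : I t ω with
        | false =>
          have hnA : t ∉ A := by
            intro hmem
            have h2 := (hfin.mem_toFinset.mp hmem).2
            rw [h2] at hb
            exact Bool.noConfusion hb
          simp [hnA]
        | true =>
          have hmem : t ∈ A := hfin.mem_toFinset.mpr ⟨ht, hb⟩
          simp [hmem]
      exact mem_iUnion.mpr ⟨⟨A, hcard, hApos⟩, hZω, hHω⟩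
    · intro hω
      obtain ⟨A, hA⟩ := mem_iUnion.mp hω
      have h := HSet_subset_Splus I A.1 A.2.2 hA.2
      rw [A.2.1] at h
      exact ⟨h, hA.1⟩
  have hdisjΛ : Pairwise (Function.onFun Disjoint fun A : Λ => Z ∩ HSet I A.1) := by
    intro A A' hne
    rw [Function.onFun, Set.disjoint_left]
    rintro ω ⟨_, hA⟩ ⟨_, hA'⟩
    apply hne
    apply Subtype.ext
    apply Finset.ext
    intro t
    constructor
    · intro ht
      have h0 : 0 < t := A.2.2 t ht
      have e := (hA t h0).symm.trans (hA' t h0)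
      exact (decide_eq_decide.mp e).mp ht
    · intro ht
      have h0 : 0 < t := A'.2.2 t ht
      have e := (hA t h0).symm.trans (hA' t h0)
      exact (decide_eq_decide.mp e).mpr ht
  have hmeasHZ : ∀ A : Λ, MeasurableSet (Z ∩ HSet I A.1) :=
    fun A => hZmeas.inter (measurableSet_HSet hI A.1)
  have hPZc : P Zᶜ = 0 := by
    rw [measure_compl hZmeas (measure_ne_top _ _), hZ1, measure_univ, tsub_self]
  have step1 : P E = P (E ∩ Z) := by
    refine le_antisymm ?_ (measure_mono inter_subset_left)
    calc P E ≤ P (E ∩ Z) + P (E \ Z) := measure_le_inter_add_diff P E Z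
      _ ≤ P (E ∩ Z) + P Zᶜ := add_le_add le_rfl (measure_mono (fun ω hω => hω.2))
      _ = P (E ∩ Z) := by rw [hPZc, add_zero]
  have step2 : P (E ∩ Z) = ∑' A : Λ, P (Z ∩ HSet I A.1) := by
    rw [hU, measure_iUnion hdisjΛ hmeasHZ]
  -- the map into the shifted configurations
  have hneA : ∀ A : Λ, A.1.Nonempty := fun A => Finset.card_pos.mp (by rw [A.2.1]; omega)
  have hsubinj : ∀ s : ℤ, Function.Injective (fun x : ℤ => x - s) := by
    intro s x y h
    dsimp at h
    omega
  let φ : Λ → Θ := fun A =>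
    ⟨(A.1.min' (hneA A), (A.1.erase (A.1.min' (hneA A))).image (· - A.1.min' (hneA A))), by
      refine ⟨A.2.2 _ (A.1.min'_mem (hneA A)), ?_, ?_⟩
      · rw [Finset.card_image_of_injective _ (hsubinj _),
          Finset.card_erase_of_mem (A.1.min'_mem (hneA A)), A.2.1]
        omega
      · intro b hb
        obtain ⟨a, ha, rfl⟩ := Finset.mem_image.mp hb
        obtain ⟨hanes, haA⟩ := Finset.mem_erase.mp ha
        have := A.1.min'_le a haA
        omega⟩
  have hAK : ∀ A : Λ, P (Z ∩ HSet I A.1) = P (KSet I (φ A).1.1 (φ A).1.2) :=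
    fun A => measure_HZ_eq_K P I hI Pn In hstat hconv A.1 A.2.2 (hneA A)
  have mem_iff : ∀ (A : Λ) (t : ℤ), t ∈ A.1 ↔ (t = (φ A).1.1 ∨ t - (φ A).1.1 ∈ (φ A).1.2) := by
    intro A t
    constructor
    · intro ht
      by_cases he : t = A.1.min' (hneA A)
      · exact Or.inl he
      · exact Or.inr (Finset.mem_image.mpr ⟨t, Finset.mem_erase.mpr ⟨he, ht⟩, rfl⟩)
    · rintro (he | hm)
      · rw [he]; exact A.1.min'_mem (hneA A)
      · obtain ⟨a, ha, haq⟩ := Finset.mem_image.mp hm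
        have : a = t := by have hd : (φ A).1.1 = A.1.min' (hneA A) := rfl; omega
        rw [← this]
        exact (Finset.mem_erase.mp ha).2
  have hφinj : Function.Injective φ := by
    intro A A' h
    have h1 : (φ A).1.1 = (φ A').1.1 := by rw [h]
    have h2 : (φ A).1.2 = (φ A').1.2 := by rw [h]
    apply Subtype.ext
    apply Finset.ext
    intro t
    rw [mem_iff A t, mem_iff A' t, h1, h2]
  have hdisjΘ : Pairwise (Function.onFun Disjoint fun p : Θ => KSet I p.1.1 p.1.2) := by
    intro p q hpq
    rw [Function.onFun, Set.disjoint_left]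
    intro ω hp hq
    obtain ⟨hp1, hp2, hp3, hp4⟩ := hp
    obtain ⟨hq1, hq2, hq3, hq4⟩ := hq
    apply hpq
    have hB : p.1.2 = q.1.2 := by
      apply Finset.ext
      intro b
      constructor
      · intro hb
        have h0 : 0 < b := p.2.2.2 b hb
        have e := (hp4 b h0).symm.trans (hq4 b h0)
        exact (decide_eq_decide.mp e).mp hb
      · intro hb
        have h0 : 0 < b := q.2.2.2 b hb
        have e := (hp4 b h0).symm.trans (hq4 b h0)
        exact (decide_eq_decide.mp e).mpr hb
    have hs : p.1.1 = q.1.1 := by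
      by_contra hss
      rcases lt_or_gt_of_ne hss with hlt | hlt
      · have h2 := hq2 (-p.1.1) (by omega) (by have := p.2.1; omega)
        rw [hp1] at h2
        exact Bool.noConfusion h2
      · have h2 := hp2 (-q.1.1) (by omega) (by have := q.2.1; omega)
        rw [hq1] at h2
        exact Bool.noConfusion h2
    exact Subtype.ext (Prod.ext hs hB)
  have hmeasK : ∀ p : Θ, MeasurableSet (KSet I p.1.1 p.1.2) :=
    fun p => measurableSet_KSet hI _ _
  have hKsub : ∀ p : Θ, KSet I p.1.1 p.1.2 ⊆ {ω | SplusFn I ω = (k : ℕ∞)} := by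
    intro p ω hω
    have h := HSet_subset_Splus I p.1.2 p.2.2.2 (fun t ht => hω.2.2.2 t ht)
    rw [p.2.2.1] at h
    exact h
  calc P E = P (E ∩ Z) := step1
    _ = ∑' A : Λ, P (Z ∩ HSet I A.1) := step2
    _ = ∑' A : Λ, P (KSet I (φ A).1.1 (φ A).1.2) := tsum_congr hAK
    _ ≤ ∑' p : Θ, P (KSet I p.1.1 p.1.2) :=
        ENNReal.tsum_comp_le_tsum_of_injective hφinj _
    _ = P (⋃ p : Θ, KSet I p.1.1 p.1.2) := (measure_iUnion hdisjΘ hmeasK).symm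
    _ ≤ P {ω | SplusFn I ω = (k : ℕ∞)} := measure_mono (iUnion_subset hKsub)

end Main

section Reverse

lemma neg_cyl_eq {γ : Type*} (X : ℤ → γ → Bool) (F : Finset ℤ) (ε : ℤ → Bool) :
    {ω | ∀ t ∈ F, X (-t) ω = ε t} = {ω | ∀ u ∈ F.image (fun t => -t), X u ω = ε (-u)} := by
  ext ω
  constructor
  · intro h u hu
    obtain ⟨t, ht, rfl⟩ := Finset.mem_image.mp hu
    rw [neg_neg]
    exact h t ht
  · intro h t ht
    have h2 := h (-t) (Finset.mem_image.mpr ⟨t, ht, rfl⟩)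
    rwa [neg_neg] at h2

lemma sminus_eq_splus_neg {Ω : Type*} (I : ℤ → Ω → Bool) (ω : Ω) :
    SminusFn I ω = SplusFn (fun t => I (-t)) ω := by
  have h : {t : ℤ | t < 0 ∧ I t ω = true} = Neg.neg '' {t : ℤ | 0 < t ∧ I (-t) ω = true} := by
    ext u
    simp only [Set.mem_image, Set.mem_setOf_eq]
    constructor
    · rintro ⟨hu, hIu⟩
      exact ⟨-u, ⟨by omega, by rwa [neg_neg]⟩, by omega⟩
    · rintro ⟨t, ⟨ht, hIt⟩, rfl⟩
      exact ⟨by omega, hIt⟩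
  show ({t : ℤ | t < 0 ∧ I t ω = true}).encard = _
  rw [h, Set.InjOn.encard_image (neg_injective.injOn)]
  rfl

end Reverse

/-- Theorem 3.2(b): under Assumption 1, the common probability mass function of
`S₋ⁱ` and `S₊ⁱ` is nonincreasing on `ℕ₀`. -/
theorem cluster_size_pmf_nonincreasing
    {Ω : Type*} [MeasurableSpace Ω] (P : Measure Ω) [IsProbabilityMeasure P]
    (I : ℤ → Ω → Bool) (hI : ∀ t, Measurable (I t))
    {Ωn : ℕ → Type*} [∀ n, MeasurableSpace (Ωn n)]
    (Pn : ∀ n, Measure (Ωn n)) (hPn : ∀ n, IsProbabilityMeasure (Pn n))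
    (In : ∀ n, ℤ → Ωn n → Bool) (hIn : ∀ n t, Measurable (In n t))
    -- `P(I₀ⁿ = 1) > 0` for all `n`
    (hpos : ∀ n, 0 < Pn n {ω | In n 0 ω = true})
    -- stationarity of each `(Iₜⁿ)ₜ`
    (hstat : ∀ n (F : Finset ℤ) (ε : ℤ → Bool) (k : ℤ),
      Pn n {ω | ∀ t ∈ F, In n t ω = ε t} = Pn n {ω | ∀ t ∈ F, In n (t + k) ω = ε t})
    -- convergence of the conditional finite-dimensional distributions
    (hconv : ∀ (F : Finset ℤ) (ε : ℤ → Bool),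
      Tendsto (fun n =>
          Pn n ({ω | ∀ t ∈ F, In n t ω = ε t} ∩ {ω | In n 0 ω = true})
            / Pn n {ω | In n 0 ω = true}) atTop
        (nhds (P {ω | ∀ t ∈ F, I t ω = ε t})))

    (k : ℕ) :
    P {ω | SplusFn I ω = ((k + 1 : ℕ) : ℕ∞)} ≤ P {ω | SplusFn I ω = (k : ℕ∞)}
    ∧ P {ω | SminusFn I ω = ((k + 1 : ℕ) : ℕ∞)} ≤ P {ω | SminusFn I ω = (k : ℕ∞)} := by
  constructor
  · exact splus_mono P I hI Pn hPn In hpos hstat hconv k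
  · -- reduce to the forward case via time reversal
    set J : ℤ → Ω → Bool := fun t ω => I (-t) ω with hJ
    set Jn : ∀ n, ℤ → Ωn n → Bool := fun n t ω => In n (-t) ω with hJn
    have hJI : ∀ t, Measurable (J t) := fun t => hI (-t)
    have hZn : ∀ n, {ω | Jn n 0 ω = true} = {ω | In n 0 ω = true} := by
      intro n
      ext ω
      simp only [hJn, Set.mem_setOf_eq, neg_zero]
    have hpos' : ∀ n, 0 < Pn n {ω | Jn n 0 ω = true} := by
      intro n; rw [hZn n]; exact hpos n
    have hstat' : ∀ n (F : Finset ℤ) (ε : ℤ → Bool) (k : ℤ),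
        Pn n {ω | ∀ t ∈ F, Jn n t ω = ε t} = Pn n {ω | ∀ t ∈ F, Jn n (t + k) ω = ε t} := by
      intro n F ε k'
      have h1 : {ω | ∀ t ∈ F, Jn n t ω = ε t}
          = {ω | ∀ u ∈ F.image (fun t => -t), In n u ω = ε (-u)} := by
        simp only [hJn]
        exact neg_cyl_eq (In n) F ε
      have h2 : {ω | ∀ t ∈ F, Jn n (t + k') ω = ε t}
          = {ω | ∀ u ∈ F.image (fun t => -t), In n (u + (-k')) ω = ε (-u)} := by
        have h3 := neg_cyl_eq (fun v => In n (v + (-k'))) F ε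
        rw [← h3]
        ext ω
        simp only [hJn, Set.mem_setOf_eq]
        constructor <;> intro h t ht <;> have h4 := h t ht
        · rwa [show -t + -k' = -(t + k') by ring]
        · rwa [show -(t + k') = -t + -k' by ring]
      rw [h1, h2]
      exact hstat n (F.image (fun t => -t)) (fun u => ε (-u)) (-k')
    have hconv' : ∀ (F : Finset ℤ) (ε : ℤ → Bool),
        Tendsto (fun n =>
            Pn n ({ω | ∀ t ∈ F, Jn n t ω = ε t} ∩ {ω | Jn n 0 ω = true})
              / Pn n {ω | Jn n 0 ω = true}) atTop
          (nhds (P {ω | ∀ t ∈ F, J t ω = ε t})) := by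
      intro F ε
      have h1 : ∀ n, {ω | ∀ t ∈ F, Jn n t ω = ε t}
          = {ω | ∀ u ∈ F.image (fun t => -t), In n u ω = ε (-u)} := by
        intro n
        simp only [hJn]
        exact neg_cyl_eq (In n) F ε
      have h2 : {ω | ∀ t ∈ F, J t ω = ε t}
          = {ω | ∀ u ∈ F.image (fun t => -t), I u ω = ε (-u)} := by
        simp only [hJ]
        exact neg_cyl_eq I F ε
      have h3 := hconv (F.image (fun t => -t)) (fun u => ε (-u))
      rw [← h2] at h3
      refine h3.congr fun n => ?_
      rw [h1 n, hZn n]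
    have hgoal1 : {ω | SminusFn I ω = ((k + 1 : ℕ) : ℕ∞)}
        = {ω | SplusFn J ω = ((k + 1 : ℕ) : ℕ∞)} := by
      ext ω; rw [Set.mem_setOf_eq, Set.mem_setOf_eq, sminus_eq_splus_neg]
    have hgoal2 : {ω | SminusFn I ω = (k : ℕ∞)} = {ω | SplusFn J ω = (k : ℕ∞)} := by
      ext ω; rw [Set.mem_setOf_eq, Set.mem_setOf_eq, sminus_eq_splus_neg]
    rw [hgoal1, hgoal2]
    exact splus_mono P J hJI Pn hPn Jn hpos' hstat' hconv' k
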